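/- Let F be a field, let d ≥ 1, and let b_1, …, b_{d+2} ∈ F. Let M be the (d+1)×(d+1) matrix whose (e, j) entry, for 1 ≤ j ≤ d+1, is b_j^e − b_{d+2}^e when 1 ≤ e ≤ d, and is b_j^{d+2} − b_{d+2}^{d+2} when e = d+1 (i.e., column j is f(b_j) − f(b_{d+2}) where f(x) = (x, x², …, x^d, x^{d+2})). Then det(M) = (−1)^{d+1} · (b_1 + ⋯ + b_{d+2}) · ∏_{1 ≤ i < j ≤ d+2} (b_j − b_i). In particular, det(M) = 0 if and only if b_i = b_j for some i ≠ j or b_1 + ⋯ + b_{d+2} = 0. -/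

import Mathlib

open Polynomial Finset


/-- Over a field `F` and `d ≥ 1`, consider the `(d+1) × (d+1)` matrix `M`
whose column `j` (for `j = 1, …, d+1`) is `f(b_j) - f(b_{d+2})`, where
`f(x) = (x, x², …, x^d, x^{d+2})` (exponents `1, …, d` and then `d+2`). Then
`det M = (-1)^{d+1} · (b_1 + ⋯ + b_{d+2}) · ∏_{i<j} (b_j - b_i)`; in particular `det M = 0`
iff `b_i = b_j` for some `i ≠ j` or `b_1 + ⋯ + b_{d+2} = 0`. -/
theorem stmt_16 (F : Type*) [Field F] (d : ℕ) (hd : 1 ≤ d) (b : Fin (d + 2) → F) :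
    (Matrix.of fun e j : Fin (d + 1) =>
        b (Fin.castSucc j) ^ (if (e : ℕ) < d then (e : ℕ) + 1 else d + 2)
          - b (Fin.last (d + 1)) ^ (if (e : ℕ) < d then (e : ℕ) + 1 else d + 2)).det
      = (-1 : F) ^ (d + 1) * (∑ i, b i) * ∏ i : Fin (d + 2), ∏ j ∈ Finset.Ioi i, (b j - b i)
    ∧ ((Matrix.of fun e j : Fin (d + 1) =>
        b (Fin.castSucc j) ^ (if (e : ℕ) < d then (e : ℕ) + 1 else d + 2)
          - b (Fin.last (d + 1)) ^ (if (e : ℕ) < d then (e : ℕ) + 1 else d + 2)).det = 0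
      ↔ (∃ i j, i ≠ j ∧ b i = b j) ∨ ∑ i, b i = 0) := by
  classical
  set M : Matrix (Fin (d + 1)) (Fin (d + 1)) F := Matrix.of (fun e j : Fin (d + 1) =>
        b (Fin.castSucc j) ^ (if (e : ℕ) < d then (e : ℕ) + 1 else d + 2)
          - b (Fin.last (d + 1)) ^ (if (e : ℕ) < d then (e : ℕ) + 1 else d + 2)) with hM
  set g : ℕ → ℕ := fun e => if e < d + 1 then e else d + 2 with hg
  set N : Matrix (Fin (d + 2)) (Fin (d + 2)) F := Matrix.of fun e j => b j ^ g (e : ℕ) with hN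
  set c : Fin (d + 2) → F := fun j => if j = Fin.last (d + 1) then 0 else -1 with hc
  set N' : Matrix (Fin (d + 2)) (Fin (d + 2)) F :=
    Matrix.of fun e j => N e j + c j * N e (Fin.last (d + 1)) with hN'
  set V0 : F := ∏ i : Fin (d + 2), ∏ j ∈ Finset.Ioi i, (b j - b i) with hV0
  -- Step 1 : det N' = det N
  have h1 : N'.det = N.det := by
    have h := Matrix.det_eq_of_forall_row_eq_smul_add_const (A := N'.transpose)
      (B := N.transpose) c (Fin.last (d + 1)) (by simp [hc]) ?_
    · simpa [Matrix.det_transpose] using h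
    · intro i j
      simp [hN', Matrix.transpose_apply]
  -- Step 2 : det N' = (-1)^(d+1) * det M
  have hrow0 : ∀ j, N' 0 j = if j = Fin.last (d + 1) then 1 else 0 := by
    intro j
    have hg0 : g ((0 : Fin (d + 2)) : ℕ) = 0 := by simp [hg]
    simp only [hN', hN, Matrix.of_apply, hg0, pow_zero, hc]
    split_ifs <;> ring
  have h2 : N'.det = (-1 : F) ^ (d + 1) * M.det := by
    rw [Matrix.det_succ_row_zero]
    rw [Finset.sum_eq_single (Fin.last (d + 1))]
    · have hminor : N'.submatrix Fin.succ (Fin.last (d + 1)).succAbove = M := by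
        ext e j
        rw [Matrix.submatrix_apply, Fin.succAbove_last]
        have hgg : g ((e.succ : Fin (d + 2)) : ℕ) = if (e : ℕ) < d then (e : ℕ) + 1 else d + 2 := by
          simp only [hg, Fin.val_succ]
          split_ifs <;> omega
        have hcj : c (Fin.castSucc j) = -1 := by
          simp [hc, (Fin.castSucc_lt_last j).ne]
        simp only [hN', hN, Matrix.of_apply, hgg, hcj, hM]
        ring
      rw [hrow0, if_pos rfl, hminor, Fin.val_last]
      ring
    · intro j _ hj
      rw [hrow0, if_neg hj]
      ring
    · intro h
      exact absurd (Finset.mem_univ _) h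
  -- Step 3 : polynomial identity ⇒ det N = V0 * ∑ b
  set v : Fin (d + 3) → Polynomial F := Fin.cons Polynomial.X (fun i => Polynomial.C (b i)) with hv
  have hVdm : (Matrix.vandermonde v).det
      = (∏ j : Fin (d + 2), (Polynomial.C (b j) - Polynomial.X)) * Polynomial.C V0 := by
    rw [Matrix.det_vandermonde, Fin.prod_univ_succ]
    congr 1
    · rw [Fin.prod_Ioi_zero]
      refine Finset.prod_congr rfl fun j _ => ?_
      simp [hv]
    · rw [hV0, map_prod]
      refine Finset.prod_congr rfl fun i _ => ?_
      rw [Fin.prod_Ioi_succ, map_prod]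
      refine Finset.prod_congr rfl fun j _ => ?_
      simp [hv]
  have hQcoeff : (∏ j : Fin (d + 2), (Polynomial.X - Polynomial.C (b j))).coeff (d + 1)
      = -∑ i, b i := by
    have h := Polynomial.prod_X_sub_C_coeff_card_pred (Finset.univ : Finset (Fin (d + 2))) b
      (by simp)
    simpa using h
  have hP : (∏ j : Fin (d + 2), (Polynomial.C (b j) - Polynomial.X))
      = Polynomial.C ((-1 : F) ^ (d + 2)) * ∏ j : Fin (d + 2), (Polynomial.X - Polynomial.C (b j)) := by
    have : ∀ j : Fin (d + 2), Polynomial.C (b j) - Polynomial.X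
        = (-1) * (Polynomial.X - Polynomial.C (b j)) := by intro j; ring
    rw [Finset.prod_congr rfl fun j _ => this j, Finset.prod_mul_distrib, Finset.prod_const]
    simp [map_pow]
  have hcoeffA : (Matrix.vandermonde v).det.coeff (d + 1)
      = (-1 : F) ^ (d + 1) * (V0 * ∑ i, b i) := by
    rw [hVdm, mul_comm, Polynomial.coeff_C_mul, hP, Polynomial.coeff_C_mul, hQcoeff]
    have : (-1 : F) ^ (d + 2) = (-1 : F) ^ (d + 1) * (-1) := pow_succ _ _
    rw [this]; ring
  have hLval : ∀ k : Fin (d + 2),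
      (((⟨d + 1, by omega⟩ : Fin (d + 3)).succAbove k : Fin (d + 3)) : ℕ) = g (k : ℕ) := by
    intro k
    by_cases h : (k : ℕ) < d + 1
    · rw [Fin.succAbove_of_castSucc_lt _ _ (by simp [Fin.lt_def, h])]
      simp [hg, h]
      omega
    · rw [Fin.succAbove_of_le_castSucc _ _ (by simp [Fin.le_def]; omega)]
      have : (k : ℕ) = d + 1 := by omega
      simp [hg, Fin.val_succ, this]
  have hminorB : ∀ j : Fin (d + 3),
      ((Matrix.vandermonde v).submatrix Fin.succ j.succAbove).det
        = Polynomial.C (Matrix.of (fun i k : Fin (d + 2) =>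
            b i ^ ((j.succAbove k : Fin (d + 3)) : ℕ))).det := by
    intro j
    rw [RingHom.map_det]
    congr 1
    ext i k
    simp [Matrix.vandermonde, hv, map_pow]
  have hcoeffB : (Matrix.vandermonde v).det.coeff (d + 1) = (-1 : F) ^ (d + 1) * N.det := by
    rw [Matrix.det_succ_row_zero, Polynomial.finset_sum_coeff]
    rw [Finset.sum_eq_single (⟨d + 1, by omega⟩ : Fin (d + 3))]
    · rw [hminorB]
      have hNT : (Matrix.of (fun i k : Fin (d + 2) =>
          b i ^ (((⟨d + 1, by omega⟩ : Fin (d + 3)).succAbove k : Fin (d + 3)) : ℕ))) = N.transpose := by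
        ext i k
        rw [Matrix.of_apply, hLval k]
        simp [hN]
      rw [hNT, Matrix.det_transpose]
      have hv00 : Matrix.vandermonde v 0 (⟨d + 1, by omega⟩ : Fin (d + 3))
          = Polynomial.X ^ (d + 1) := by
        simp [Matrix.vandermonde, hv]
      rw [hv00]
      have : ((-1 : Polynomial F) ^ ((⟨d + 1, by omega⟩ : Fin (d + 3)) : ℕ) * Polynomial.X ^ (d + 1)
          * Polynomial.C N.det)
          = Polynomial.C ((-1 : F) ^ (d + 1) * N.det) * Polynomial.X ^ (d + 1) := by
        push_cast
        rw [map_mul, map_pow, map_neg, map_one]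
        ring
      rw [this, Polynomial.coeff_C_mul, Polynomial.coeff_X_pow, if_pos rfl, mul_one]
    · intro j _ hj
      have hvj : Matrix.vandermonde v 0 j = Polynomial.X ^ (j : ℕ) := by
        simp [Matrix.vandermonde, hv]
      rw [hminorB, hvj]
      have : ((-1 : Polynomial F) ^ (j : ℕ) * Polynomial.X ^ (j : ℕ)
          * Polynomial.C (Matrix.of (fun i k : Fin (d + 2) =>
            b i ^ ((j.succAbove k : Fin (d + 3)) : ℕ))).det)
          = Polynomial.C ((-1 : F) ^ (j : ℕ) * (Matrix.of (fun i k : Fin (d + 2) =>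
            b i ^ ((j.succAbove k : Fin (d + 3)) : ℕ))).det) * Polynomial.X ^ (j : ℕ) := by
        rw [map_mul, map_pow, map_neg, map_one]
        ring
      rw [this, Polynomial.coeff_C_mul, Polynomial.coeff_X_pow, if_neg, mul_zero]
      intro h
      apply hj
      exact Fin.ext h.symm
    · intro h
      exact absurd (Finset.mem_univ _) h
  have hpow_ne : ((-1 : F) ^ (d + 1)) ≠ 0 := pow_ne_zero _ (by norm_num)
  have hNdet : N.det = V0 * ∑ i, b i := by
    apply mul_left_cancel₀ hpow_ne
    rw [← hcoeffB, hcoeffA]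
  have hMdet : M.det = (-1 : F) ^ (d + 1) * (∑ i, b i) * V0 := by
    apply mul_left_cancel₀ hpow_ne
    rw [← h2, h1, hNdet]
    have hsq : (-1 : F) ^ (d + 1) * ((-1 : F) ^ (d + 1)) = 1 := by
      rw [← mul_pow]; norm_num
    calc V0 * ∑ i, b i = ((-1 : F) ^ (d + 1) * ((-1 : F) ^ (d + 1))) * ((∑ i, b i) * V0) := by
          rw [hsq]; ring
      _ = (-1 : F) ^ (d + 1) * ((-1 : F) ^ (d + 1) * (∑ i, b i) * V0) := by ring
  refine ⟨hMdet, ?_⟩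
  rw [hMdet]
  constructor
  · intro h
    rcases mul_eq_zero.mp h with h' | hV
    · rcases mul_eq_zero.mp h' with h'' | hs
      · exact absurd h'' hpow_ne
      · exact Or.inr hs
    · left
      rw [hV0, Finset.prod_eq_zero_iff] at hV
      obtain ⟨i, -, hi⟩ := hV
      rw [Finset.prod_eq_zero_iff] at hi
      obtain ⟨j, hji, hij⟩ := hi
      exact ⟨i, j, (Finset.mem_Ioi.mp hji).ne, (sub_eq_zero.mp hij).symm⟩
  · intro h
    rcases h with ⟨i, j, hij, hbij⟩ | hs
    · have hV : V0 = 0 := by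
        rcases lt_or_gt_of_ne hij with hlt | hlt
        · rw [hV0]
          refine Finset.prod_eq_zero (Finset.mem_univ i) ?_
          refine Finset.prod_eq_zero (Finset.mem_Ioi.mpr hlt) ?_
          rw [sub_eq_zero]; exact hbij.symm
        · rw [hV0]
          refine Finset.prod_eq_zero (Finset.mem_univ j) ?_
          refine Finset.prod_eq_zero (Finset.mem_Ioi.mpr hlt) ?_
          rw [sub_eq_zero]; exact hbij
      rw [hV, mul_zero]
    · rw [hs, mul_zero, zero_mul]
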